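/- For every τ > ν the function x ↦ ⟨x⟩^{−τ} is integrable on ℝ^d, i.e. ∫_{ℝ^d} ⟨x⟩^{−τ} dx < ∞. -/

import Mathlib

open MeasureTheory

noncomputable section

/-- The Euclidean norm on `ℝ^d`. -/
def euclNorm {d : ℕ} (x : Fin d → ℝ) : ℝ := Real.sqrt (∑ i, (x i) ^ 2)

/-- The anisotropic dilation `t^{-a} x := (t^{-a_1} x_1, …, t^{-a_d} x_d)`. -/
def aDilNeg {d : ℕ} (a : Fin d → ℝ) (t : ℝ) (x : Fin d → ℝ) : Fin d → ℝ :=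
  fun i => t ^ (-(a i)) * x i

/-- `nrm` is the anisotropic quasi-norm `|·|_a`. -/
def IsAnisoNorm {d : ℕ} (a : Fin d → ℝ) (nrm : (Fin d → ℝ) → ℝ) : Prop :=
  nrm 0 = 0 ∧ ∀ x : Fin d → ℝ, x ≠ 0 → 0 < nrm x ∧ euclNorm (aDilNeg a (nrm x) x) = 1

/-- for `τ > ν = a_1 + ⋯ + a_d` the function `x ↦ ⟨x⟩^{-τ}` is integrable
on `ℝ^d`, where `⟨x⟩ := |(1,x)|_{(1,a)}` is the anisotropic bracket. -/
theorem stmt4 (d : ℕ) (hd : 1 ≤ d) (a : Fin d → ℝ) (ha : ∀ i, 1 ≤ a i)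
    (nrmE : (Fin (d + 1) → ℝ) → ℝ) (hnrmE : IsAnisoNorm (Fin.cons 1 a) nrmE)
    (τ : ℝ) (hτ : (∑ i, a i) < τ) :
    Integrable (fun x : Fin d → ℝ => nrmE (Fin.cons 1 x) ^ (-τ)) volume := by
  classical
  obtain ⟨-, hmain⟩ := hnrmE
  set ν : ℝ := ∑ i, a i with hν
  have hν1 : (1 : ℝ) ≤ ν := by
    have h1 : ((d : ℝ)) = ∑ _i : Fin d, (1 : ℝ) := by simp
    have h2 : (1 : ℝ) ≤ (d : ℝ) := by exact_mod_cast hd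
    calc (1 : ℝ) ≤ (d : ℝ) := h2
      _ = ∑ _i : Fin d, (1 : ℝ) := h1
      _ ≤ ν := Finset.sum_le_sum fun i _ => ha i
  have hν0 : (0 : ℝ) < ν := lt_of_lt_of_le one_pos hν1
  set β : ℝ := τ / ν with hβ
  have hβ1 : 1 < β := (one_lt_div hν0).mpr hτ
  have hβ0 : 0 < β := lt_trans one_pos hβ1
  have hτβ : τ = ν * β := by rw [hβ]; field_simp [hν0.ne']
  set A : Fin (d + 1) → ℝ := Fin.cons 1 a with hA
  have hA1 : ∀ j, 1 ≤ A j := by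
    intro j
    refine Fin.cases ?_ ?_ j
    · simp [hA]
    · intro i; simpa [hA] using ha i
  have hAipos : ∀ j, 0 < A j := fun j => lt_of_lt_of_le one_pos (hA1 j)
  -- the quantity S x r
  set S : (Fin d → ℝ) → ℝ → ℝ := fun x r =>
    ∑ j, (r ^ (-(A j))) ^ 2 * ((Fin.cons 1 x : Fin (d + 1) → ℝ) j) ^ 2 with hSdef
  have hcons0 : ∀ x : Fin d → ℝ, (Fin.cons 1 x : Fin (d + 1) → ℝ) 0 = 1 := fun x => rfl
  have hyne : ∀ x : Fin d → ℝ, (Fin.cons 1 x : Fin (d + 1) → ℝ) ≠ 0 := by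
    intro x h
    have := congrFun h 0
    simp [hcons0] at this
  -- positivity and value of S at the norm
  have hpos : ∀ x : Fin d → ℝ, 0 < nrmE (Fin.cons 1 x) := fun x => (hmain _ (hyne x)).1
  have hSval : ∀ x : Fin d → ℝ, S x (nrmE (Fin.cons 1 x)) = 1 := by
    intro x
    have h := (hmain _ (hyne x)).2
    rw [euclNorm] at h
    have h1 : ∑ j, (aDilNeg A (nrmE (Fin.cons 1 x)) (Fin.cons 1 x) j) ^ 2 = 1 :=
      Real.sqrt_eq_one.mp h
    calc S x (nrmE (Fin.cons 1 x))
        = ∑ j, (aDilNeg A (nrmE (Fin.cons 1 x)) (Fin.cons 1 x) j) ^ 2 := by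
          simp only [hSdef]
          exact Finset.sum_congr rfl fun j _ => by simp [aDilNeg, mul_pow]
      _ = 1 := h1
  have hSterm_le : ∀ (x : Fin d → ℝ) (j : Fin (d + 1)),
      ((nrmE (Fin.cons 1 x)) ^ (-(A j))) ^ 2 * ((Fin.cons 1 x : Fin (d + 1) → ℝ) j) ^ 2 ≤ 1 := by
    intro x j
    have := hSval x
    rw [hSdef] at this
    calc ((nrmE (Fin.cons 1 x)) ^ (-(A j))) ^ 2 * ((Fin.cons 1 x : Fin (d + 1) → ℝ) j) ^ 2
        ≤ ∑ k, ((nrmE (Fin.cons 1 x)) ^ (-(A k))) ^ 2 * ((Fin.cons 1 x : Fin (d + 1) → ℝ) k) ^ 2 :=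
          Finset.single_le_sum
            (f := fun k : Fin (d + 1) =>
              ((nrmE (Fin.cons 1 x)) ^ (-(A k))) ^ 2 * ((Fin.cons 1 x : Fin (d + 1) → ℝ) k) ^ 2)
            (fun k _ => mul_nonneg (sq_nonneg _) (sq_nonneg _)) (Finset.mem_univ j)
      _ = 1 := this
  -- t ≥ 1
  have h1le : ∀ x : Fin d → ℝ, 1 ≤ nrmE (Fin.cons 1 x) := by
    intro x
    set t := nrmE (Fin.cons 1 x) with htdef
    have ht : 0 < t := hpos x
    have h := hSterm_le x 0
    have hA0 : A 0 = 1 := rfl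
    rw [hA0, hcons0] at h
    have h' : (t ^ (-(1 : ℝ))) ^ 2 ≤ 1 := by simpa using h
    rw [Real.rpow_neg_one] at h'
    have habs : |t⁻¹| ≤ 1 := (sq_le_one_iff_abs_le_one _).mp h'
    have hinv : t⁻¹ ≤ 1 := le_trans (le_abs_self _) habs
    nlinarith [mul_pos ht (inv_pos.mpr ht), mul_inv_cancel₀ ht.ne']
  -- |x i| ≤ t ^ (a i)
  have hxle : ∀ (x : Fin d → ℝ) (i : Fin d), |x i| ≤ (nrmE (Fin.cons 1 x)) ^ (a i) := by
    intro x i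
    set t := nrmE (Fin.cons 1 x) with htdef
    have ht : 0 < t := hpos x
    have h := hSterm_le x i.succ
    have hAi : A i.succ = a i := by simp [hA]
    have hci : (Fin.cons 1 x : Fin (d + 1) → ℝ) i.succ = x i := by simp
    rw [hAi, hci] at h
    have hrp : 0 < t ^ (a i) := Real.rpow_pos_of_pos ht _
    have h' : (t ^ (-(a i)) * x i) ^ 2 ≤ 1 := by rw [mul_pow]; exact h
    have habs : |t ^ (-(a i)) * x i| ≤ 1 := (sq_le_one_iff_abs_le_one _).mp h'
    rw [abs_mul, abs_of_pos (Real.rpow_pos_of_pos ht _)] at habs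
    rw [Real.rpow_neg ht.le] at habs
    calc |x i| = (t ^ (a i))⁻¹ * |x i| * (t ^ (a i)) := by field_simp
      _ ≤ 1 * (t ^ (a i)) := mul_le_mul_of_nonneg_right habs hrp.le
      _ = t ^ (a i) := one_mul _
  -- the pointwise bound
  have hbd : ∀ x : Fin d → ℝ,
      (nrmE (Fin.cons 1 x)) ^ (-τ) ≤ ∏ i, (max 1 |x i|) ^ (-β) := by
    intro x
    set t := nrmE (Fin.cons 1 x) with htdef
    have ht : 0 < t := hpos x
    have h1t : 1 ≤ t := h1le x
    have hmaxle : ∀ i, max 1 |x i| ≤ t ^ (a i) := by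
      intro i
      exact max_le (Real.one_le_rpow h1t (le_trans zero_le_one (ha i))) (hxle x i)
    have hmaxpos : ∀ i, (0 : ℝ) < max 1 |x i| := fun i => lt_of_lt_of_le one_pos (le_max_left _ _)
    have hP : ∏ i, max 1 |x i| ≤ t ^ ν := by
      calc ∏ i, max 1 |x i| ≤ ∏ i, t ^ (a i) :=
            Finset.prod_le_prod (fun i _ => (hmaxpos i).le) (fun i _ => hmaxle i)
        _ = t ^ ν := by rw [hν]; exact (Real.rpow_sum_of_pos ht a Finset.univ).symm
    have hPpos : (0 : ℝ) < ∏ i, max 1 |x i| := Finset.prod_pos fun i _ => hmaxpos i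
    have h2 : (t ^ ν) ^ (-β) ≤ (∏ i, max 1 |x i|) ^ (-β) :=
      Real.rpow_le_rpow_of_nonpos hPpos hP (neg_nonpos.mpr hβ0.le)
    have h3 : t ^ (-τ) = (t ^ ν) ^ (-β) := by
      rw [hτβ, ← mul_neg, Real.rpow_mul ht.le]
    calc t ^ (-τ) = (t ^ ν) ^ (-β) := h3
      _ ≤ (∏ i, max 1 |x i|) ^ (-β) := h2
      _ = ∏ i, (max 1 |x i|) ^ (-β) :=
          (Real.finset_prod_rpow Finset.univ _ (fun i _ => (hmaxpos i).le) _).symm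
  -- monotonicity of S in r
  have hanti : ∀ (x : Fin d → ℝ) (r s : ℝ), 0 < r → r ≤ s → S x s ≤ S x r := by
    intro x r s hr hrs
    refine Finset.sum_le_sum fun j _ => ?_
    refine mul_le_mul_of_nonneg_right ?_ (sq_nonneg _)
    have h1 : s ^ (-(A j)) ≤ r ^ (-(A j)) :=
      Real.rpow_le_rpow_of_nonpos hr hrs (neg_nonpos.mpr (hAipos j).le)
    exact pow_le_pow_left₀ (Real.rpow_nonneg (le_trans hr.le hrs) _) h1 2
  have hstrict : ∀ (x : Fin d → ℝ) (r s : ℝ), 0 < r → r < s → S x s < S x r := by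
    intro x r s hr hrs
    refine Finset.sum_lt_sum (fun j _ => ?_) ⟨0, Finset.mem_univ _, ?_⟩
    · refine mul_le_mul_of_nonneg_right ?_ (sq_nonneg _)
      have h1 : s ^ (-(A j)) ≤ r ^ (-(A j)) :=
        Real.rpow_le_rpow_of_nonpos hr hrs.le (neg_nonpos.mpr (hAipos j).le)
      exact pow_le_pow_left₀ (Real.rpow_nonneg (le_trans hr.le hrs.le) _) h1 2
    · have hA0 : A 0 = 1 := rfl
      rw [hA0, hcons0]
      have h1 : s ^ (-(1:ℝ)) < r ^ (-(1:ℝ)) :=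
        Real.rpow_lt_rpow_of_neg hr hrs (by norm_num)
      have h2 : (0:ℝ) < s ^ (-(1:ℝ)) := Real.rpow_pos_of_pos (lt_trans hr hrs) _
      have := pow_lt_pow_left₀ h1 h2.le (by norm_num : 2 ≠ 0)
      simpa using this
  -- measurability
  have hmeas : Measurable fun x : Fin d → ℝ => nrmE (Fin.cons 1 x) := by
    apply measurable_of_Iic
    intro r
    rcases lt_or_ge r 1 with hr | hr
    · have : (fun x : Fin d → ℝ => nrmE (Fin.cons 1 x)) ⁻¹' Set.Iic r = ∅ := by
        ext x
        simp only [Set.mem_preimage, Set.mem_Iic, Set.mem_empty_iff_false, iff_false, not_le]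
        exact lt_of_lt_of_le hr (h1le x)
      rw [this]; exact MeasurableSet.empty
    · have hr0 : (0 : ℝ) < r := lt_of_lt_of_le one_pos hr
      have hset : (fun x : Fin d → ℝ => nrmE (Fin.cons 1 x)) ⁻¹' Set.Iic r
          = {x | S x r ≤ 1} := by
        ext x
        simp only [Set.mem_preimage, Set.mem_Iic, Set.mem_setOf_eq]
        constructor
        · intro h
          calc S x r ≤ S x (nrmE (Fin.cons 1 x)) := hanti x _ _ (hpos x) h
            _ = 1 := hSval x
        · intro h
          by_contra hc
          push_neg at hc
          have := hstrict x r (nrmE (Fin.cons 1 x)) hr0 hc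
          rw [hSval x] at this
          linarith
      rw [hset]
      have hScont : Measurable fun x : Fin d → ℝ => S x r := by
        rw [hSdef]
        refine Finset.measurable_sum _ fun j _ => ?_
        have hcj : Measurable fun x : Fin d → ℝ => (Fin.cons 1 x : Fin (d + 1) → ℝ) j := by
          refine Fin.cases ?_ ?_ j
          · simpa using (measurable_const : Measurable fun _ : Fin d → ℝ => (1 : ℝ))
          · intro i
            simpa using (measurable_pi_apply i : Measurable fun x : Fin d → ℝ => x i)
        exact ((hcj.pow_const 2).const_mul _)
      exact measurableSet_le hScont measurable_const
  -- integrability of the 1D majorant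
  have hg : Integrable (fun u : ℝ => (max 1 |u|) ^ (-β)) volume := by
    have hfin : ((Module.finrank ℝ ℝ : ℕ) : ℝ) < β := by
      simp only [Module.finrank_self, Nat.cast_one]
      exact hβ1
    have h1 : Integrable (fun u : ℝ => (2 : ℝ) ^ β * (1 + ‖u‖) ^ (-β)) volume :=
      (integrable_one_add_norm hfin).const_mul _
    refine h1.mono' ?_ ?_
    · refine Continuous.aestronglyMeasurable ?_
      refine Continuous.rpow_const (continuous_const.max continuous_abs) fun u => Or.inl ?_
      exact ne_of_gt (lt_of_lt_of_le one_pos (le_max_left _ _))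
    · filter_upwards with u
      have hmpos : (0 : ℝ) < max 1 |u| := lt_of_lt_of_le one_pos (le_max_left _ _)
      rw [Real.norm_eq_abs, abs_of_pos (Real.rpow_pos_of_pos hmpos _)]
      have hhalf : (1 + |u|) / 2 ≤ max 1 |u| := by
        rcases le_total |u| 1 with h | h
        · have := le_max_left (1 : ℝ) |u|; linarith
        · have := le_max_right (1 : ℝ) |u|; linarith
      have hhpos : (0 : ℝ) < (1 + |u|) / 2 := by positivity
      have h2 : (max 1 |u|) ^ (-β) ≤ ((1 + |u|) / 2) ^ (-β) :=
        Real.rpow_le_rpow_of_nonpos hhpos hhalf (neg_nonpos.mpr hβ0.le)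
      have h3 : ((1 + |u|) / 2) ^ (-β) = (2 : ℝ) ^ β * (1 + |u|) ^ (-β) := by
        rw [Real.div_rpow (by positivity) (by norm_num : (0:ℝ) ≤ 2)]
        rw [Real.rpow_neg (by norm_num : (0:ℝ) ≤ 2)]
        field_simp
      rw [Real.norm_eq_abs]
      calc (max 1 |u|) ^ (-β) ≤ ((1 + |u|) / 2) ^ (-β) := h2
        _ = (2 : ℝ) ^ β * (1 + |u|) ^ (-β) := h3
  -- integrability of the product majorant
  have hG : Integrable (fun x : Fin d → ℝ => ∏ i, (max 1 |x i|) ^ (-β)) volume :=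
    Integrable.fintype_prod (𝕜 := ℝ) (f := fun _ u => (max 1 |u|) ^ (-β)) fun _ => hg
  refine hG.mono' ?_ ?_
  · have houter : Measurable fun y : ℝ => y ^ (-τ) := by fun_prop
    exact ((houter.comp hmeas).aestronglyMeasurable)
  · filter_upwards with x
    rw [Real.norm_eq_abs, abs_of_pos (Real.rpow_pos_of_pos (hpos x) _)]
    exact hbd x
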